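/- Let A and B be quantum nodes with input and output spaces of dimension d, let H_{P^out} = ⊕_{i∈I} H_{P_i^L} ⊗ H_{P_i^R} be an orthogonal direct sum decomposition, and suppose σ_{ABP} = Σ_{i∈I} ρ^i_{A|B P_i^L} ⊗ ρ^i_{B|P_i^R A} is a valid process operator over the nodes A, B and the root node P (with trivial input space), where for each i, ρ^i_{A|B P_i^L} is the CJ operator of a channel from H_{B^out} ⊗ H_{P_i^L} to H_{A^in}, ρ^i_{B|P_i^R A} is the CJ operator of a channel from H_{P_i^R} ⊗ H_{A^out} to H_{B^in}, and the i-th summand is supported on the i-th subspace of H*_{P^out}. Then for each i ∈ I, at most one of the following holds: ρ^i_{A|B P_i^L} is signalling from B^out to A^in, or ρ^i_{B|P_i^R A} is signalling from A^out to B^in. -/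

import Mathlib

open Matrix BigOperators
open scoped ComplexOrder
noncomputable section

/-- `ρ` (an operator indexed by `Y × X`) is the CJ operator of a CPTP map from `X` to `Y`. -/
def IsChannelCJ {Y X : Type} [Fintype Y] [Fintype X] [DecidableEq X]
    (ρ : Matrix (Y × X) (Y × X) ℂ) : Prop :=
  ρ.PosSemidef ∧ ∀ x x' : X, ∑ y : Y, ρ (y, x) (y, x') = if x = x' then (1 : ℂ) else 0

/-- `τ` is the transposed CJ operator of a CPTP map from `I` to `O`. -/
def IsLocalTau {I O : Type} [Fintype I] [Fintype O] [DecidableEq I]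
    (τ : Matrix (I × O) (I × O) ℂ) : Prop :=
  ∃ ρ : Matrix (O × I) (O × I) ℂ, IsChannelCJ ρ ∧
    ∀ (p q : I × O), τ p q = ρ (q.2, q.1) (p.2, p.1)

/-- `σe` is a process operator over the three nodes `A`, `B` and a root node `P`
(trivial input space, output space `PO`); the trivial input space of `P` is suppressed,
and the local CPTP operations at `P` are the preparations of states on `PO`. -/
def IsProcess3 {Ai Ao Bi Bo PO : Type}
    [Fintype Ai] [Fintype Ao] [Fintype Bi] [Fintype Bo] [Fintype PO]
    [DecidableEq Ai] [DecidableEq Bi]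
    (σe : Matrix ((Ai × Ao) × (Bi × Bo) × PO) ((Ai × Ao) × (Bi × Bo) × PO) ℂ) : Prop :=
  σe.PosSemidef ∧
    ∀ (τA : Matrix (Ai × Ao) (Ai × Ao) ℂ) (τB : Matrix (Bi × Bo) (Bi × Bo) ℂ),
      IsLocalTau τA → IsLocalTau τB →
      ∀ sP : Matrix PO PO ℂ, sP.PosSemidef → sP.trace = 1 →
      (σe * Matrix.of fun (p q : (Ai × Ao) × (Bi × Bo) × PO) =>
          τA p.1 q.1 * τB p.2.1 q.2.1 * sP q.2.2 p.2.2).trace = 1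

section
variable {Ai Ao Bi Bo : Type} {ι : Type} {PL PR : ι → Type}

/-- The operator `σ_{ABP} = Σ_{i∈I} ρ^i_{A|B P_i^L} ⊗ ρ^i_{B|P_i^R A}` on
`H_{A^in} ⊗ H*_{A^out} ⊗ H_{B^in} ⊗ H*_{B^out} ⊗ H*_{P^out}`, where
`H_{P^out} = ⊕_{i∈I} H_{P_i^L} ⊗ H_{P_i^R}` (modelled by the sigma type
`Σ i, PL i × PR i`), with the `i`-th summand supported on the `i`-th subspace. -/
def sumProc [DecidableEq ι]
    (ρA : (i : ι) → Matrix (Ai × (Bo × PL i)) (Ai × (Bo × PL i)) ℂ)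
    (ρB : (i : ι) → Matrix (Bi × (PR i × Ao)) (Bi × (PR i × Ao)) ℂ) :
    Matrix ((Ai × Ao) × (Bi × Bo) × (Σ i : ι, PL i × PR i))
           ((Ai × Ao) × (Bi × Bo) × (Σ i : ι, PL i × PR i)) ℂ :=
  Matrix.of fun p q =>
    if h : p.2.2.1 = q.2.2.1 then
      ρA p.2.2.1 (p.1.1, (p.2.1.2, p.2.2.2.1))
        (q.1.1, (q.2.1.2, cast (congrArg PL h).symm q.2.2.2.1)) *
      ρB p.2.2.1 (p.2.1.1, (p.2.2.2.2, p.1.2))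
        (q.2.1.1, (cast (congrArg PR h).symm q.2.2.2.2, q.1.2))
    else 0

/-- The channel with CJ operator `ρ` (from `H_{B^out} ⊗ H_{P_i^L}` to `H_{A^in}`) is
signalling from `B^out` to `A^in`, i.e. it is *not* of the form
`(1/d_{B^out}) Tr_{(B^out)*}[ρ] ⊗ 1_{(B^out)*}` on the `B^out` factor. -/
def SignallingBtoA [Fintype Bo] [DecidableEq Bo] {X : Type}
    (ρ : Matrix (Ai × (Bo × X)) (Ai × (Bo × X)) ℂ) : Prop :=
  ¬ ∀ (a a' : Ai) (b b' : Bo) (x x' : X),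
      ρ (a, (b, x)) (a', (b', x')) =
        (if b = b' then 1 else 0) * (1 / (Fintype.card Bo : ℂ)) *
          ∑ c : Bo, ρ (a, (c, x)) (a', (c, x'))

/-- The channel with CJ operator `ρ` (from `H_{P_i^R} ⊗ H_{A^out}` to `H_{B^in}`) is
signalling from `A^out` to `B^in`. -/
def SignallingAtoB [Fintype Ao] [DecidableEq Ao] {X : Type}
    (ρ : Matrix (Bi × (X × Ao)) (Bi × (X × Ao)) ℂ) : Prop :=
  ¬ ∀ (b b' : Bi) (a a' : Ao) (x x' : X),
      ρ (b, (x, a)) (b', (x', a')) =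
        (if a = a' then 1 else 0) * (1 / (Fintype.card Ao : ℂ)) *
          ∑ c : Ao, ρ (b, (x, c)) (b', (x', c))

end

set_option linter.unusedSectionVars false
set_option maxHeartbeats 1000000

namespace CausalAux

def pureMat {n : Type} [Fintype n] (v : n → ℂ) : Matrix n n ℂ :=
  Matrix.of fun a b => v a * (starRingEnd ℂ) (v b)

variable {n : Type} [Fintype n] [DecidableEq n]

lemma quad_pure (v x : n → ℂ) : (star x) ⬝ᵥ (pureMat v).mulVec x
    = (Complex.normSq (∑ a, (starRingEnd ℂ) (x a) * v a) : ℝ) := by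
  have h : (star x) ⬝ᵥ (pureMat v).mulVec x
      = (∑ a, (starRingEnd ℂ) (x a) * v a) * (starRingEnd ℂ) (∑ b, (starRingEnd ℂ) (x b) * v b) := by
    simp only [dotProduct, Matrix.mulVec, dotProduct, pureMat, Matrix.of_apply,
      Pi.star_apply, map_sum, RCLike.star_def, Finset.sum_mul, Finset.mul_sum]
    rw [Finset.sum_comm]
    refine Finset.sum_congr rfl fun a _ => Finset.sum_congr rfl fun b _ => ?_
    simp only [_root_.map_mul, RingHomCompTriple.comp_apply, RingHom.id_apply, Complex.conj_conj]
    ring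
  rw [h, Complex.mul_conj]

lemma pureMat_isHermitian (v : n → ℂ) : (pureMat v).IsHermitian := by
  ext a b
  simp [pureMat, Matrix.conjTranspose_apply, mul_comm]

lemma pureMat_posSemidef (v : n → ℂ) : (pureMat v).PosSemidef := by
  refine Matrix.PosSemidef.of_dotProduct_mulVec_nonneg (pureMat_isHermitian v) fun x => ?_
  rw [quad_pure]
  exact Complex.zero_le_real.mpr (Complex.normSq_nonneg _)

lemma smul_posSemidef {M : Matrix n n ℂ} (hM : M.PosSemidef) {c : ℝ} (hc : 0 ≤ c) :
    ((c : ℂ) • M).PosSemidef := by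
  refine Matrix.PosSemidef.of_dotProduct_mulVec_nonneg ?_ fun x => ?_
  · ext a b
    simp only [Matrix.conjTranspose_apply, Matrix.smul_apply, star_mul', RCLike.star_def,
      Complex.conj_ofReal, smul_eq_mul]
    rw [← hM.1.apply a b]
    simp [Matrix.conjTranspose_apply]
  · have h := hM.dotProduct_mulVec_nonneg x
    simp only [Matrix.smul_mulVec, dotProduct_smul, smul_eq_mul]
    refine mul_nonneg ?_ h
    exact_mod_cast Complex.zero_le_real.mpr hc

def unitv (p : n) : n → ℂ := fun x => if x = p then 1 else 0
def vtwo (p q : n) (c : ℂ) : n → ℂ := fun x => if x = p then 1 else if x = q then c else 0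

def Good (M : Matrix n n ℂ) : Prop := M.PosSemidef ∧ M.trace = 1 ∧ (1 - M).PosSemidef

lemma quad_one (x : n → ℂ) : (star x) ⬝ᵥ ((1 : Matrix n n ℂ)).mulVec x
    = ((∑ a, Complex.normSq (x a) : ℝ) : ℂ) := by
  simp only [Matrix.one_mulVec, dotProduct, Pi.star_apply, RCLike.star_def]
  push_cast
  refine Finset.sum_congr rfl fun a _ => ?_
  rw [mul_comm]
  exact Complex.mul_conj _

lemma sub_smul_pure_posSemidef (v : n → ℂ) {c : ℝ} (hc : 0 ≤ c)
    (h : ∀ x : n → ℂ, c * Complex.normSq (∑ a, (starRingEnd ℂ) (x a) * v a)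
        ≤ ∑ a, Complex.normSq (x a)) :
    ((1 : Matrix n n ℂ) - (c : ℂ) • pureMat v).PosSemidef := by
  refine Matrix.PosSemidef.of_dotProduct_mulVec_nonneg ((Matrix.isHermitian_one).sub (((smul_posSemidef (pureMat_posSemidef v) hc)).1)) fun x => ?_
  rw [Matrix.sub_mulVec, dotProduct_sub, Matrix.smul_mulVec,
    dotProduct_smul, quad_one, quad_pure, smul_eq_mul]
  rw [← Complex.ofReal_mul, ← Complex.ofReal_sub]
  exact Complex.zero_le_real.mpr (by linarith [h x])

lemma good_unit (p : n) : Good (pureMat (unitv p)) := by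
  refine ⟨pureMat_posSemidef _, ?_, ?_⟩
  · simp [Matrix.trace, Matrix.diag, pureMat, unitv, Finset.sum_ite_eq']
  · have := sub_smul_pure_posSemidef (n := n) (unitv p) (c := 1) zero_le_one (fun x => ?_)
    · simpa using this
    · simp only [unitv, mul_ite, mul_one, mul_zero, Finset.sum_ite_eq', Finset.mem_univ, if_true,
        one_mul]
      calc Complex.normSq ((starRingEnd ℂ) (x p))
          = Complex.normSq (x p) := by simp
        _ ≤ ∑ a, Complex.normSq (x a) :=
            Finset.single_le_sum (fun a _ => Complex.normSq_nonneg _) (Finset.mem_univ p)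


lemma normSq_add_le (a b : ℂ) : Complex.normSq (a + b) ≤ 2 * Complex.normSq a + 2 * Complex.normSq b := by
  simp only [Complex.normSq_apply, Complex.add_re, Complex.add_im]
  nlinarith [sq_nonneg (a.re - b.re), sq_nonneg (a.im - b.im)]

lemma vtwo_sum (p q : n) (hpq : p ≠ q) (c : ℂ) (f : n → ℂ) :
    ∑ a, f a * vtwo p q c a = f p + f q * c := by
  have h : ∀ a, f a * vtwo p q c a
      = (if a = p then f p else 0) + (if a = q then f q * c else 0) := by
    intro a
    by_cases h1 : a = p <;> by_cases h2 : a = q <;>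
      simp [vtwo, h1, h2, hpq] <;> simp_all [vtwo] <;> ring
  simp [h, Finset.sum_add_distrib, Finset.sum_ite_eq']

lemma good_half_vtwo (p q : n) (hpq : p ≠ q) (c : ℂ) (hc : Complex.normSq c = 1) :
    Good (((2⁻¹ : ℝ) : ℂ) • (pureMat (vtwo p q c) : Matrix n n ℂ)) := by
  have htr : (pureMat (vtwo p q c)).trace = 2 := by
    have : (pureMat (vtwo p q c)).trace
        = ∑ a, ((starRingEnd ℂ) (vtwo p q c a)) * vtwo p q c a := by
      simp only [Matrix.trace, Matrix.diag, pureMat, Matrix.of_apply]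
      exact Finset.sum_congr rfl fun a _ => by ring
    rw [this, vtwo_sum p q hpq]
    have : (starRingEnd ℂ) (vtwo p q c p) = 1 := by simp [vtwo]
    rw [this]
    have : (starRingEnd ℂ) (vtwo p q c q) = (starRingEnd ℂ) c := by simp [vtwo, hpq, Ne.symm hpq]
    rw [this, mul_comm, Complex.mul_conj, hc]
    norm_num
  refine ⟨smul_posSemidef (pureMat_posSemidef _) (by norm_num), ?_, ?_⟩
  · rw [Matrix.trace_smul, htr, smul_eq_mul]
    norm_num
  · refine sub_smul_pure_posSemidef _ (by norm_num) (fun x => ?_)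
    have hz : ∑ a, (starRingEnd ℂ) (x a) * vtwo p q c a
        = (starRingEnd ℂ) (x p) + (starRingEnd ℂ) (x q) * c :=
      vtwo_sum p q hpq c _
    rw [hz]
    have h1 : Complex.normSq ((starRingEnd ℂ) (x p) + (starRingEnd ℂ) (x q) * c)
        ≤ 2 * Complex.normSq (x p) + 2 * Complex.normSq (x q) := by
      calc Complex.normSq ((starRingEnd ℂ) (x p) + (starRingEnd ℂ) (x q) * c)
          ≤ 2 * Complex.normSq ((starRingEnd ℂ) (x p))
            + 2 * Complex.normSq ((starRingEnd ℂ) (x q) * c) := normSq_add_le _ _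
        _ = 2 * Complex.normSq (x p) + 2 * Complex.normSq (x q) := by
            simp [Complex.normSq_mul, hc, Complex.normSq_conj]
    have h2 : Complex.normSq (x p) + Complex.normSq (x q) ≤ ∑ a, Complex.normSq (x a) := by
      have := Finset.sum_le_sum_of_subset_of_nonneg
        (Finset.subset_univ ({p, q} : Finset n))
        (fun a _ _ => Complex.normSq_nonneg (x a))
      rwa [Finset.sum_pair hpq] at this
    linarith

def gOne (p : n) : Matrix n n ℂ := pureMat (unitv p)
def gTwo (p q : n) (c : ℂ) : Matrix n n ℂ := ((2⁻¹ : ℝ) : ℂ) • pureMat (vtwo p q c)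


/-- A good state which is moreover a nonnegative multiple of a pure state. -/
def Gen {n : Type} [Fintype n] [DecidableEq n] (M : Matrix n n ℂ) : Prop :=
  Good M ∧ ∃ (c : ℝ) (v : n → ℂ), 0 ≤ c ∧ M = ((c : ℝ) : ℂ) • pureMat v

lemma gen_unit (p : n) : Gen (pureMat (unitv p)) :=
  ⟨good_unit p, 1, unitv p, zero_le_one, by norm_num⟩

lemma gen_half_vtwo (p q : n) (hpq : p ≠ q) (c : ℂ) (hc : Complex.normSq c = 1) :
    Gen (((2⁻¹ : ℝ) : ℂ) • (pureMat (vtwo p q c) : Matrix n n ℂ)) :=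
  ⟨good_half_vtwo p q hpq c hc, 2⁻¹, vtwo p q c, by norm_num, rfl⟩

def Rep (M : Matrix n n ℂ) : Prop :=
  ∃ (c : Fin 4 → ℂ) (G : Fin 4 → Matrix n n ℂ), (∀ k, Gen (G k)) ∧ M = ∑ k, c k • G k

def RepD (M : Matrix n n ℂ) : Prop :=
  ∃ (c : Fin 4 → ℂ) (G G' : Fin 4 → Matrix n n ℂ),
    (∀ k, Gen (G k)) ∧ (∀ k, Gen (G' k)) ∧ M = ∑ k, c k • (G k - G' k)

lemma stdBasis_decomp {p q : n} (hpq : p ≠ q) :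
    Matrix.single p q (1:ℂ)
      = gTwo p q 1 + Complex.I • gTwo p q Complex.I
        - ((1+Complex.I)/2) • (gOne p + gOne q) := by
  ext x y
  by_cases hx : x = p <;> by_cases hx' : x = q <;> by_cases hy : y = p <;> by_cases hy' : y = q <;>
    simp [gTwo, gOne, pureMat, vtwo, unitv, Matrix.single, hx, hx', hy, hy', hpq,
      Ne.symm hpq, Matrix.smul_apply, Matrix.add_apply, Matrix.sub_apply, Complex.ext_iff] <;>
    norm_num <;> simp_all <;> tauto

lemma rep_stdBasis (p q : n) : Rep (Matrix.single p q (1:ℂ)) := by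
  by_cases hpq : p = q
  · subst hpq
    refine ⟨![1,0,0,0], fun _ => gOne p, fun _ => gen_unit p, ?_⟩
    have : Matrix.single p p (1:ℂ) = gOne p := by
      ext x y
      by_cases hx : x = p <;> by_cases hy : y = p <;>
        simp [gOne, pureMat, unitv, Matrix.single, hx, hy] <;> tauto
    rw [this, Fin.sum_univ_four]
    simp
  · refine ⟨![1, Complex.I, -((1+Complex.I)/2), -((1+Complex.I)/2)],
      ![gTwo p q 1, gTwo p q Complex.I, gOne p, gOne q], ?_, ?_⟩
    · intro k
      fin_cases k
      · exact gen_half_vtwo p q hpq 1 (by simp)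
      · exact gen_half_vtwo p q hpq Complex.I (by simp)
      · exact gen_unit p
      · exact gen_unit q
    · rw [Fin.sum_univ_four, stdBasis_decomp hpq]
      simp [Fin.isValue]
      module

lemma repD_stdBasis {p q : n} (hpq : p ≠ q) : RepD (Matrix.single p q (1:ℂ)) := by
  refine ⟨![1, Complex.I, -((1+Complex.I)/2), -((1+Complex.I)/2)],
    ![gTwo p q 1, gTwo p q Complex.I, gOne p, gOne q], fun _ => gOne p, ?_, fun _ => gen_unit p, ?_⟩
  · intro k
    fin_cases k
    · exact gen_half_vtwo p q hpq 1 (by simp)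
    · exact gen_half_vtwo p q hpq Complex.I (by simp)
    · exact gen_unit p
    · exact gen_unit q
  · rw [Fin.sum_univ_four, stdBasis_decomp hpq]
    simp [Fin.isValue]
    module

lemma repD_diag (p q : n) : RepD ((gOne p : Matrix n n ℂ) - gOne q) := by
  refine ⟨![1, 0, 0, 0], fun _ => gOne p, fun _ => gOne q, fun _ => gen_unit p,
    fun _ => gen_unit q, ?_⟩
  rw [Fin.sum_univ_four]
  simp


section funcs
variable {A B L Bi R Ao : Type} [Fintype A] [Fintype B] [Fintype L] [Fintype Bi] [Fintype R]
  [Fintype Ao] [DecidableEq A] [DecidableEq B] [DecidableEq L] [DecidableEq Bi] [DecidableEq R]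
  [DecidableEq Ao]

/-- A-side contraction: `∑ ρA (a,(bo,l)) (a',(bo',l')) * W a' a * Y bo bo' * sL l l'`. -/
def fAq (ρ : Matrix (A × (B × L)) (A × (B × L)) ℂ) (W : Matrix A A ℂ) (Y : Matrix B B ℂ)
    (sL : Matrix L L ℂ) : ℂ :=
  ∑ y : (A × A) × (B × B) × (L × L),
    ρ (y.1.1, (y.2.1.1, y.2.2.1)) (y.1.2, (y.2.1.2, y.2.2.2))
      * W y.1.2 y.1.1 * Y y.2.1.1 y.2.1.2 * sL y.2.2.1 y.2.2.2

/-- B-side contraction: `∑ ρB (b,(r,ao)) (b',(r',ao')) * Z ao ao' * V b' b * sR r r'`. -/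
def fBq (ρ : Matrix (Bi × (R × Ao)) (Bi × (R × Ao)) ℂ) (Z : Matrix Ao Ao ℂ) (V : Matrix Bi Bi ℂ)
    (sR : Matrix R R ℂ) : ℂ :=
  ∑ z : (Bi × Bi) × (R × R) × (Ao × Ao),
    ρ (z.1.1, (z.2.1.1, z.2.2.1)) (z.1.2, (z.2.1.2, z.2.2.2))
      * Z z.2.2.1 z.2.2.2 * V z.1.2 z.1.1 * sR z.2.1.1 z.2.1.2

variable {ρ : Matrix (A × (B × L)) (A × (B × L)) ℂ} {ρ' : Matrix (Bi × (R × Ao)) (Bi × (R × Ao)) ℂ}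

lemma fAq_sum1 {κ : Type} (s : Finset κ) (f : κ → Matrix A A ℂ) (Y : Matrix B B ℂ) (sL : Matrix L L ℂ) :
    fAq ρ (∑ k ∈ s, f k) Y sL = ∑ k ∈ s, fAq ρ (f k) Y sL := by
  simp only [fAq, Matrix.sum_apply, Finset.mul_sum, Finset.sum_mul]
  rw [Finset.sum_comm]

lemma fAq_sum2 {κ : Type} (s : Finset κ) (W : Matrix A A ℂ) (f : κ → Matrix B B ℂ) (sL : Matrix L L ℂ) :
    fAq ρ W (∑ k ∈ s, f k) sL = ∑ k ∈ s, fAq ρ W (f k) sL := by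
  simp only [fAq, Matrix.sum_apply, Finset.mul_sum, Finset.sum_mul]
  rw [Finset.sum_comm]

lemma fAq_sum3 {κ : Type} (s : Finset κ) (W : Matrix A A ℂ) (Y : Matrix B B ℂ) (f : κ → Matrix L L ℂ) :
    fAq ρ W Y (∑ k ∈ s, f k) = ∑ k ∈ s, fAq ρ W Y (f k) := by
  simp only [fAq, Matrix.sum_apply, Finset.mul_sum, Finset.sum_mul]
  rw [Finset.sum_comm]

lemma fAq_smul1 (c : ℂ) (W : Matrix A A ℂ) (Y : Matrix B B ℂ) (sL : Matrix L L ℂ) :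
    fAq ρ (c • W) Y sL = c * fAq ρ W Y sL := by
  simp only [fAq, Matrix.smul_apply, smul_eq_mul]
  rw [Finset.mul_sum]
  exact Finset.sum_congr rfl fun x _ => by ring

lemma fAq_smul2 (c : ℂ) (W : Matrix A A ℂ) (Y : Matrix B B ℂ) (sL : Matrix L L ℂ) :
    fAq ρ W (c • Y) sL = c * fAq ρ W Y sL := by
  simp only [fAq, Matrix.smul_apply, smul_eq_mul]
  rw [Finset.mul_sum]
  exact Finset.sum_congr rfl fun x _ => by ring

lemma fAq_smul3 (c : ℂ) (W : Matrix A A ℂ) (Y : Matrix B B ℂ) (sL : Matrix L L ℂ) :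
    fAq ρ W Y (c • sL) = c * fAq ρ W Y sL := by
  simp only [fAq, Matrix.smul_apply, smul_eq_mul]
  rw [Finset.mul_sum]
  exact Finset.sum_congr rfl fun x _ => by ring

lemma fAq_sub2 (W : Matrix A A ℂ) (Y Y' : Matrix B B ℂ) (sL : Matrix L L ℂ) :
    fAq ρ W (Y - Y') sL = fAq ρ W Y sL - fAq ρ W Y' sL := by
  simp only [fAq, Matrix.sub_apply, mul_sub, sub_mul, Finset.sum_sub_distrib]

lemma fBq_sum1 {κ : Type} (s : Finset κ) (f : κ → Matrix Ao Ao ℂ) (V : Matrix Bi Bi ℂ) (sR : Matrix R R ℂ) :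
    fBq ρ' (∑ k ∈ s, f k) V sR = ∑ k ∈ s, fBq ρ' (f k) V sR := by
  simp only [fBq, Matrix.sum_apply, Finset.mul_sum, Finset.sum_mul]
  rw [Finset.sum_comm]

lemma fBq_sum2 {κ : Type} (s : Finset κ) (Z : Matrix Ao Ao ℂ) (f : κ → Matrix Bi Bi ℂ) (sR : Matrix R R ℂ) :
    fBq ρ' Z (∑ k ∈ s, f k) sR = ∑ k ∈ s, fBq ρ' Z (f k) sR := by
  simp only [fBq, Matrix.sum_apply, Finset.mul_sum, Finset.sum_mul]
  rw [Finset.sum_comm]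

lemma fBq_sum3 {κ : Type} (s : Finset κ) (Z : Matrix Ao Ao ℂ) (V : Matrix Bi Bi ℂ) (f : κ → Matrix R R ℂ) :
    fBq ρ' Z V (∑ k ∈ s, f k) = ∑ k ∈ s, fBq ρ' Z V (f k) := by
  simp only [fBq, Matrix.sum_apply, Finset.mul_sum, Finset.sum_mul]
  rw [Finset.sum_comm]

lemma fBq_smul1 (c : ℂ) (Z : Matrix Ao Ao ℂ) (V : Matrix Bi Bi ℂ) (sR : Matrix R R ℂ) :
    fBq ρ' (c • Z) V sR = c * fBq ρ' Z V sR := by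
  simp only [fBq, Matrix.smul_apply, smul_eq_mul]
  rw [Finset.mul_sum]
  exact Finset.sum_congr rfl fun x _ => by ring

lemma fBq_smul2 (c : ℂ) (Z : Matrix Ao Ao ℂ) (V : Matrix Bi Bi ℂ) (sR : Matrix R R ℂ) :
    fBq ρ' Z (c • V) sR = c * fBq ρ' Z V sR := by
  simp only [fBq, Matrix.smul_apply, smul_eq_mul]
  rw [Finset.mul_sum]
  exact Finset.sum_congr rfl fun x _ => by ring

lemma fBq_smul3 (c : ℂ) (Z : Matrix Ao Ao ℂ) (V : Matrix Bi Bi ℂ) (sR : Matrix R R ℂ) :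
    fBq ρ' Z V (c • sR) = c * fBq ρ' Z V sR := by
  simp only [fBq, Matrix.smul_apply, smul_eq_mul]
  rw [Finset.mul_sum]
  exact Finset.sum_congr rfl fun x _ => by ring

lemma fBq_sub1 (Z Z' : Matrix Ao Ao ℂ) (V : Matrix Bi Bi ℂ) (sR : Matrix R R ℂ) :
    fBq ρ' (Z - Z') V sR = fBq ρ' Z V sR - fBq ρ' Z' V sR := by
  simp only [fBq, Matrix.sub_apply, mul_sub, sub_mul, Finset.sum_sub_distrib]

/-- Full contraction. -/
def FF (ρA : Matrix (A × (B × L)) (A × (B × L)) ℂ) (ρB : Matrix (Bi × (R × Ao)) (Bi × (R × Ao)) ℂ)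
    (MA : Matrix (Ao × A) (Ao × A) ℂ) (MB : Matrix (B × Bi) (B × Bi) ℂ)
    (sL : Matrix L L ℂ) (sR : Matrix R R ℂ) : ℂ :=
  ∑ x : ((A × A) × (B × B) × (L × L)) × ((Bi × Bi) × (R × R) × (Ao × Ao)),
    ρA (x.1.1.1, (x.1.2.1.1, x.1.2.2.1)) (x.1.1.2, (x.1.2.1.2, x.1.2.2.2))
      * ρB (x.2.1.1, (x.2.2.1.1, x.2.2.2.1)) (x.2.1.2, (x.2.2.1.2, x.2.2.2.2))
      * MA (x.2.2.2.1, x.1.1.1) (x.2.2.2.2, x.1.1.2)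
      * MB (x.1.2.1.1, x.2.1.1) (x.1.2.1.2, x.2.1.2)
      * sL x.1.2.2.1 x.1.2.2.2 * sR x.2.2.1.1 x.2.2.1.2

lemma FF_addMA (ρA : Matrix (A × (B × L)) (A × (B × L)) ℂ) (ρB : Matrix (Bi × (R × Ao)) (Bi × (R × Ao)) ℂ)
    (MA MA' : Matrix (Ao × A) (Ao × A) ℂ) (MB : Matrix (B × Bi) (B × Bi) ℂ)
    (sL : Matrix L L ℂ) (sR : Matrix R R ℂ) :
    FF ρA ρB (MA + MA') MB sL sR = FF ρA ρB MA MB sL sR + FF ρA ρB MA' MB sL sR := by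
  simp only [FF, Matrix.add_apply, mul_add, add_mul, Finset.sum_add_distrib]

lemma FF_addMB (ρA : Matrix (A × (B × L)) (A × (B × L)) ℂ) (ρB : Matrix (Bi × (R × Ao)) (Bi × (R × Ao)) ℂ)
    (MA : Matrix (Ao × A) (Ao × A) ℂ) (MB MB' : Matrix (B × Bi) (B × Bi) ℂ)
    (sL : Matrix L L ℂ) (sR : Matrix R R ℂ) :
    FF ρA ρB MA (MB + MB') sL sR = FF ρA ρB MA MB sL sR + FF ρA ρB MA MB' sL sR := by
  simp only [FF, Matrix.add_apply, mul_add, add_mul, Finset.sum_add_distrib]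

open Kronecker in
lemma FF_kron (ρA : Matrix (A × (B × L)) (A × (B × L)) ℂ) (ρB : Matrix (Bi × (R × Ao)) (Bi × (R × Ao)) ℂ)
    (Z : Matrix Ao Ao ℂ) (W : Matrix A A ℂ) (Y : Matrix B B ℂ) (V : Matrix Bi Bi ℂ)
    (sL : Matrix L L ℂ) (sR : Matrix R R ℂ) :
    FF ρA ρB (Z ⊗ₖ Wᵀ) (Y ⊗ₖ Vᵀ) sL sR = fAq ρA W Y sL * fBq ρB Z V sR := by
  rw [fAq, fBq, Finset.sum_mul_sum, FF, Fintype.sum_prod_type]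
  refine Finset.sum_congr rfl fun y _ => Finset.sum_congr rfl fun z _ => ?_
  simp only [Matrix.kroneckerMap_apply, Matrix.transpose_apply]
  ring

end funcs


section kron
open Kronecker
variable {m p : Type} [Fintype m] [Fintype p] [DecidableEq m] [DecidableEq p]

lemma conjTranspose_kron (A : Matrix m m ℂ) (B : Matrix p p ℂ) :
    (A ⊗ₖ B)ᴴ = Aᴴ ⊗ₖ Bᴴ := by
  ext x y
  simp [Matrix.conjTranspose_apply, Matrix.kroneckerMap_apply]

lemma kron_posSemidef {A : Matrix m m ℂ} {B : Matrix p p ℂ}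
    (hA : A.PosSemidef) (hB : B.PosSemidef) : (A ⊗ₖ B).PosSemidef := by
  exact hA.kronecker hB

end kron


section chan
open Kronecker
variable {O I' : Type} [Fintype O] [Fintype I'] [DecidableEq O] [DecidableEq I']

/-- A measure-and-prepare channel CJ operator. -/
def chan (φ ψ : Matrix O O ℂ) (P : Matrix I' I' ℂ) : Matrix (O × I') (O × I') ℂ :=
  φ ⊗ₖ Pᵀ + ψ ⊗ₖ ((1 : Matrix I' I' ℂ) - P)ᵀ

lemma chan_isChannelCJ {φ ψ : Matrix O O ℂ} {P : Matrix I' I' ℂ}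
    (hφ : Good φ) (hψ : Good ψ) (hP : Good P) : IsChannelCJ (chan φ ψ P) := by
  constructor
  · exact (kron_posSemidef hφ.1 hP.1.transpose).add (kron_posSemidef hψ.1 hP.2.2.transpose)
  · intro x x'
    have h1 : ∑ y : O, chan φ ψ P (y, x) (y, x')
        = φ.trace * P x' x + ψ.trace * ((1 : Matrix I' I' ℂ) x' x - P x' x) := by
      simp only [chan, Matrix.add_apply, Matrix.kroneckerMap_apply, Matrix.transpose_apply,
        Matrix.sub_apply, Finset.sum_add_distrib, ← Finset.sum_mul, Matrix.trace, Matrix.diag]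
    rw [h1, hφ.2.1, hψ.2.1, Matrix.one_apply]
    by_cases h : x = x'
    · simp [h]
    · simp [h, Ne.symm h]

lemma chan_eval (φ ψ : Matrix O O ℂ) (P : Matrix I' I' ℂ) (p q : I' × O) :
    (Matrix.of fun p q : I' × O => chan φ ψ P (q.2, q.1) (p.2, p.1)) p q
      = chan φ ψ P (q.2, q.1) (p.2, p.1) := rfl

lemma isLocalTau_chan {φ ψ : Matrix O O ℂ} {P : Matrix I' I' ℂ}
    (hφ : Good φ) (hψ : Good ψ) (hP : Good P) :
    IsLocalTau (Matrix.of fun p q : I' × O => chan φ ψ P (q.2, q.1) (p.2, p.1)) :=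
  ⟨chan φ ψ P, chan_isChannelCJ hφ hψ hP, fun _ _ => rfl⟩

end chan

section block
variable {ι : Type} [Fintype ι] [DecidableEq ι] {PL PR : ι → Type}
  [∀ i, Fintype (PL i)] [∀ i, Fintype (PR i)] [∀ i, DecidableEq (PL i)] [∀ i, DecidableEq (PR i)]

/-- The product vector `vL ⊗ vR` embedded in the `i`-th block of the direct sum. -/
def blockVec (i : ι) (vL : PL i → ℂ) (vR : PR i → ℂ) : (Σ j, PL j × PR j) → ℂ :=
  fun x => dite (x.1 = i) (fun h => vL (h ▸ x.2).1 * vR (h ▸ x.2).2) (fun _ => 0)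

@[simp] lemma blockVec_same (i : ι) (vL : PL i → ℂ) (vR : PR i → ℂ) (u : PL i × PR i) :
    blockVec i vL vR ⟨i, u⟩ = vL u.1 * vR u.2 := by
  simp [blockVec]

lemma blockVec_ne (i : ι) (vL : PL i → ℂ) (vR : PR i → ℂ) {x : Σ j, PL j × PR j}
    (h : ¬ x.1 = i) : blockVec i vL vR x = 0 := by
  simp [blockVec, h]

lemma blockVec_trace (i : ι) (vL : PL i → ℂ) (vR : PR i → ℂ) (cL cR : ℝ)
    (hL : (((cL : ℝ) : ℂ) • pureMat vL).trace = 1) (hR : (((cR : ℝ) : ℂ) • pureMat vR).trace = 1) :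
    ((((cL * cR : ℝ)) : ℂ) • pureMat (blockVec i vL vR)).trace = 1 := by
  have hL' : ((cL : ℂ)) * ∑ l, vL l * (starRingEnd ℂ) (vL l) = 1 := by
    simpa [Matrix.trace, Matrix.diag, pureMat, Finset.mul_sum] using hL
  have hR' : ((cR : ℂ)) * ∑ r, vR r * (starRingEnd ℂ) (vR r) = 1 := by
    simpa [Matrix.trace, Matrix.diag, pureMat, Finset.mul_sum] using hR
  have key : ∑ x : (Σ j, PL j × PR j), blockVec i vL vR x * (starRingEnd ℂ) (blockVec i vL vR x)
      = (∑ l, vL l * (starRingEnd ℂ) (vL l)) * (∑ r, vR r * (starRingEnd ℂ) (vR r)) := by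
    rw [← Finset.univ_sigma_univ, Finset.sum_sigma]
    rw [Finset.sum_eq_single i]
    · rw [Fintype.sum_prod_type, Finset.sum_mul]
      refine Finset.sum_congr rfl fun l _ => ?_
      rw [Finset.mul_sum]
      refine Finset.sum_congr rfl fun r _ => ?_
      simp only [blockVec_same]
      simp only [_root_.map_mul]
      ring
    · intro j _ hj
      refine Finset.sum_eq_zero fun u _ => ?_
      rw [blockVec_ne i vL vR (by simpa using hj)]
      simp
    · intro h; exact absurd (Finset.mem_univ _) h
  have : ((((cL * cR : ℝ)) : ℂ) • pureMat (blockVec i vL vR)).trace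
      = ((cL : ℂ) * (cR : ℂ)) * ∑ x, blockVec i vL vR x * (starRingEnd ℂ) (blockVec i vL vR x) := by
    simp [Matrix.trace, Matrix.diag, pureMat, Finset.mul_sum]
  rw [this, key]
  calc ((cL : ℂ) * (cR : ℂ)) * ((∑ l, vL l * (starRingEnd ℂ) (vL l)) * (∑ r, vR r * (starRingEnd ℂ) (vR r)))
      = (((cL : ℂ)) * ∑ l, vL l * (starRingEnd ℂ) (vL l)) * (((cR : ℂ)) * ∑ r, vR r * (starRingEnd ℂ) (vR r)) := by ring
    _ = 1 := by rw [hL', hR', one_mul]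

end block

section traceeq
variable {Ai Ao Bi Bo : Type} {ι : Type} {PL PR : ι → Type}
variable [Fintype Ai] [Fintype Ao] [Fintype Bi] [Fintype Bo]
  [DecidableEq Ai] [DecidableEq Ao] [DecidableEq Bi] [DecidableEq Bo]
  [Fintype ι] [DecidableEq ι]
  [∀ i, Fintype (PL i)] [∀ i, Fintype (PR i)] [∀ i, DecidableEq (PL i)] [∀ i, DecidableEq (PR i)]

lemma sumProc_same (ρA : (i : ι) → Matrix (Ai × (Bo × PL i)) (Ai × (Bo × PL i)) ℂ)
    (ρB : (i : ι) → Matrix (Bi × (PR i × Ao)) (Bi × (PR i × Ao)) ℂ) (i : ι)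
    (a a' : Ai) (ao ao' : Ao) (b b' : Bi) (bo bo' : Bo) (u w : PL i × PR i) :
    sumProc ρA ρB ((a, ao), ((b, bo), ⟨i, u⟩)) ((a', ao'), ((b', bo'), ⟨i, w⟩))
      = ρA i (a, (bo, u.1)) (a', (bo', w.1)) * ρB i (b, (u.2, ao)) (b', (w.2, ao')) := by
  simp [sumProc]

lemma sumProc_ne (ρA : (i : ι) → Matrix (Ai × (Bo × PL i)) (Ai × (Bo × PL i)) ℂ)
    (ρB : (i : ι) → Matrix (Bi × (PR i × Ao)) (Bi × (PR i × Ao)) ℂ) {j j' : ι} (h : ¬ j = j')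
    (a a' : Ai) (ao ao' : Ao) (b b' : Bi) (bo bo' : Bo) (u : PL j × PR j) (w : PL j' × PR j') :
    sumProc ρA ρB ((a, ao), ((b, bo), ⟨j, u⟩)) ((a', ao'), ((b', bo'), ⟨j', w⟩)) = 0 := by
  simp [sumProc, h]

def flatEquiv :
    (Σ jj' : ι × ι, ((Ai × Ao) × (Bi × Bo) × (PL jj'.1 × PR jj'.1))
        × ((Ai × Ao) × (Bi × Bo) × (PL jj'.2 × PR jj'.2)))
    ≃ (((Ai × Ao) × (Bi × Bo) × (Σ j, PL j × PR j))
        × ((Ai × Ao) × (Bi × Bo) × (Σ j, PL j × PR j))) where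
  toFun y := ((y.2.1.1, y.2.1.2.1, ⟨y.1.1, y.2.1.2.2⟩), (y.2.2.1, y.2.2.2.1, ⟨y.1.2, y.2.2.2.2⟩))
  invFun x := ⟨(x.1.2.2.1, x.2.2.2.1),
    ((x.1.1, x.1.2.1, x.1.2.2.2), (x.2.1, x.2.2.1, x.2.2.2.2))⟩
  left_inv y := by obtain ⟨⟨j, j'⟩, ⟨⟨a, b, u⟩, ⟨c, d, w⟩⟩⟩ := y; rfl
  right_inv x := by obtain ⟨⟨a, b, ⟨j, u⟩⟩, ⟨c, d, ⟨j', w⟩⟩⟩ := x; rfl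

def blkEquiv (i : ι) :
    (((Ai × Ai) × (Bo × Bo) × (PL i × PL i)) × ((Bi × Bi) × (PR i × PR i) × (Ao × Ao)))
    ≃ (((Ai × Ao) × (Bi × Bo) × (PL i × PR i)) × ((Ai × Ao) × (Bi × Bo) × (PL i × PR i))) where
  toFun x := (((x.1.1.1, x.2.2.2.1), (x.2.1.1, x.1.2.1.1), (x.1.2.2.1, x.2.2.1.1)),
              ((x.1.1.2, x.2.2.2.2), (x.2.1.2, x.1.2.1.2), (x.1.2.2.2, x.2.2.1.2)))
  invFun u := (((u.1.1.1, u.2.1.1), ((u.1.2.1.2, u.2.2.1.2), (u.1.2.2.1, u.2.2.2.1))),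
               ((u.1.2.1.1, u.2.2.1.1), ((u.1.2.2.2, u.2.2.2.2), (u.1.1.2, u.2.1.2))))
  left_inv x := by
    obtain ⟨⟨⟨a, a'⟩, ⟨bo, bo'⟩, ⟨l, l'⟩⟩, ⟨⟨b, b'⟩, ⟨r, r'⟩, ⟨ao, ao'⟩⟩⟩ := x; rfl
  right_inv u := by
    obtain ⟨⟨⟨a, ao⟩, ⟨b, bo⟩, ⟨l, r⟩⟩, ⟨⟨a', ao'⟩, ⟨b', bo'⟩, ⟨l', r'⟩⟩⟩ := u; rfl

lemma trace_eq_FF (ρA : (i : ι) → Matrix (Ai × (Bo × PL i)) (Ai × (Bo × PL i)) ℂ)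
    (ρB : (i : ι) → Matrix (Bi × (PR i × Ao)) (Bi × (PR i × Ao)) ℂ) (i : ι)
    (MA : Matrix (Ao × Ai) (Ao × Ai) ℂ) (MB : Matrix (Bo × Bi) (Bo × Bi) ℂ)
    (cL cR : ℝ) (vL : PL i → ℂ) (vR : PR i → ℂ) :
    (sumProc ρA ρB * Matrix.of fun p q : (Ai × Ao) × (Bi × Bo) × (Σ j, PL j × PR j) =>
        (Matrix.of fun p' q' : Ai × Ao => MA (q'.2, q'.1) (p'.2, p'.1)) p.1 q.1 *
        (Matrix.of fun p' q' : Bi × Bo => MB (q'.2, q'.1) (p'.2, p'.1)) p.2.1 q.2.1 *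
        ((((cL * cR : ℝ)) : ℂ) • pureMat (blockVec i vL vR)) q.2.2 p.2.2).trace
      = FF (ρA i) (ρB i) MA MB (((cL : ℝ) : ℂ) • pureMat vL) (((cR : ℝ) : ℂ) • pureMat vR) := by
  rw [Matrix.trace]
  simp only [Matrix.diag_apply, Matrix.mul_apply, Matrix.of_apply, Matrix.smul_apply,
    smul_eq_mul]
  rw [← Fintype.sum_prod_type']
  rw [← Equiv.sum_comp (flatEquiv (Ai := Ai) (Ao := Ao) (Bi := Bi) (Bo := Bo) (PL := PL) (PR := PR))]
  rw [← Finset.univ_sigma_univ, Finset.sum_sigma]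
  rw [Finset.sum_eq_single ((i, i) : ι × ι)]
  · rw [FF]
    refine (Fintype.sum_equiv (blkEquiv i) _ _ fun x => ?_).symm
    obtain ⟨⟨⟨a, a'⟩, ⟨bo, bo'⟩, ⟨l, l'⟩⟩, ⟨⟨b, b'⟩, ⟨r, r'⟩, ⟨ao, ao'⟩⟩⟩ := x
    simp only [flatEquiv, blkEquiv, Equiv.coe_fn_mk, sumProc_same, blockVec_same, pureMat,
      Matrix.of_apply, Matrix.smul_apply, smul_eq_mul, _root_.map_mul]
    push_cast
    ring
  · intro jj' _ hne
    refine Finset.sum_eq_zero fun u _ => ?_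
    obtain ⟨j, j'⟩ := jj'
    by_cases hjj : j = j'
    · subst hjj
      have hji : ¬ j = i := by
        intro h; exact hne (by rw [h])
      have hzero : blockVec i vL vR ⟨j, u.1.2.2⟩ = 0 := blockVec_ne i vL vR hji
      simp only [flatEquiv, Equiv.coe_fn_mk, pureMat, Matrix.of_apply]
      rw [hzero]
      simp
    · simp only [flatEquiv, Equiv.coe_fn_mk, sumProc_ne ρA ρB hjj]
      simp
  · intro h; exact absurd (Finset.mem_univ _) h

end traceeq

section keyv
variable {Ai Ao Bi Bo : Type} {ι : Type} {PL PR : ι → Type}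
variable [Fintype Ai] [Fintype Ao] [Fintype Bi] [Fintype Bo]
  [DecidableEq Ai] [DecidableEq Ao] [DecidableEq Bi] [DecidableEq Bo]
  [Fintype ι] [DecidableEq ι]
  [∀ i, Fintype (PL i)] [∀ i, Fintype (PR i)] [∀ i, DecidableEq (PL i)] [∀ i, DecidableEq (PR i)]


lemma FF_one (ρA : (i : ι) → Matrix (Ai × (Bo × PL i)) (Ai × (Bo × PL i)) ℂ)
    (ρB : (i : ι) → Matrix (Bi × (PR i × Ao)) (Bi × (PR i × Ao)) ℂ)
    (hproc : IsProcess3 (sumProc ρA ρB)) (i : ι)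
    {φ ψ : Matrix Ao Ao ℂ} {P : Matrix Ai Ai ℂ} {χ ξ : Matrix Bo Bo ℂ} {Q : Matrix Bi Bi ℂ}
    (hφ : Good φ) (hψ : Good ψ) (hP : Good P) (hχ : Good χ) (hξ : Good ξ) (hQ : Good Q)
    {cL cR : ℝ} {vL : PL i → ℂ} {vR : PR i → ℂ} (hcL : 0 ≤ cL) (hcR : 0 ≤ cR)
    (htrL : (((cL : ℝ) : ℂ) • pureMat vL).trace = 1)
    (htrR : (((cR : ℝ) : ℂ) • pureMat vR).trace = 1) :
    FF (ρA i) (ρB i) (chan φ ψ P) (chan χ ξ Q)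
      (((cL : ℝ) : ℂ) • pureMat vL) (((cR : ℝ) : ℂ) • pureMat vR) = 1 := by
  have h := hproc.2
    (Matrix.of fun p q : Ai × Ao => chan φ ψ P (q.2, q.1) (p.2, p.1))
    (Matrix.of fun p q : Bi × Bo => chan χ ξ Q (q.2, q.1) (p.2, p.1))
    (isLocalTau_chan hφ hψ hP) (isLocalTau_chan hχ hξ hQ)
    ((((cL * cR : ℝ)) : ℂ) • pureMat (blockVec i vL vR))
    (smul_posSemidef (pureMat_posSemidef _) (mul_nonneg hcL hcR))
    (blockVec_trace i vL vR cL cR htrL htrR)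
  rw [trace_eq_FF ρA ρB i (chan φ ψ P) (chan χ ξ Q) cL cR vL vR] at h
  exact h

lemma FF_chan_expand {i : ι} (ρA' : Matrix (Ai × (Bo × PL i)) (Ai × (Bo × PL i)) ℂ)
    (ρB' : Matrix (Bi × (PR i × Ao)) (Bi × (PR i × Ao)) ℂ)
    (φ ψ : Matrix Ao Ao ℂ) (P : Matrix Ai Ai ℂ) (χ ξ : Matrix Bo Bo ℂ) (Q : Matrix Bi Bi ℂ)
    (sL : Matrix (PL i) (PL i) ℂ) (sR : Matrix (PR i) (PR i) ℂ) :
    FF ρA' ρB' (chan φ ψ P) (chan χ ξ Q) sL sR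
      = fAq ρA' P χ sL * fBq ρB' φ Q sR
        + fAq ρA' P ξ sL * fBq ρB' φ (1 - Q) sR
        + fAq ρA' (1 - P) χ sL * fBq ρB' ψ Q sR
        + fAq ρA' (1 - P) ξ sL * fBq ρB' ψ (1 - Q) sR := by
  rw [chan, chan, FF_addMA, FF_addMB, FF_addMB, FF_kron, FF_kron, FF_kron, FF_kron]
  ring

lemma key_vanish (ρA : (i : ι) → Matrix (Ai × (Bo × PL i)) (Ai × (Bo × PL i)) ℂ)
    (ρB : (i : ι) → Matrix (Bi × (PR i × Ao)) (Bi × (PR i × Ao)) ℂ)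
    (hproc : IsProcess3 (sumProc ρA ρB)) (i : ι)
    {φ ψ : Matrix Ao Ao ℂ} {P : Matrix Ai Ai ℂ} {χ ξ : Matrix Bo Bo ℂ} {Q : Matrix Bi Bi ℂ}
    (hφ : Good φ) (hψ : Good ψ) (hP : Good P) (hχ : Good χ) (hξ : Good ξ) (hQ : Good Q)
    {sL : Matrix (PL i) (PL i) ℂ} {sR : Matrix (PR i) (PR i) ℂ}
    (hsL : Gen sL) (hsR : Gen sR) :
    (fAq (ρA i) P χ sL - fAq (ρA i) P ξ sL) * (fBq (ρB i) φ Q sR - fBq (ρB i) ψ Q sR) = 0 := by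
  obtain ⟨hsLg, cL, vL, hcL, rfl⟩ := hsL
  obtain ⟨hsRg, cR, vR, hcR, rfl⟩ := hsR
  have htrL := hsLg.2.1
  have htrR := hsRg.2.1
  have h1 := FF_one ρA ρB hproc i hφ hψ hP hχ hξ hQ hcL hcR htrL htrR
  have h2 := FF_one ρA ρB hproc i hψ hψ hP hχ hξ hQ hcL hcR htrL htrR
  have h3 := FF_one ρA ρB hproc i hφ hψ hP hξ hξ hQ hcL hcR htrL htrR
  have h4 := FF_one ρA ρB hproc i hψ hψ hP hξ hξ hQ hcL hcR htrL htrR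
  rw [FF_chan_expand] at h1 h2 h3 h4
  linear_combination h1 - h2 - h3 + h4

end keyv

section grand
variable {Ai Ao Bi Bo : Type} {ι : Type} {PL PR : ι → Type}
variable [Fintype Ai] [Fintype Ao] [Fintype Bi] [Fintype Bo]
  [DecidableEq Ai] [DecidableEq Ao] [DecidableEq Bi] [DecidableEq Bo]
  [Fintype ι] [DecidableEq ι]
  [∀ i, Fintype (PL i)] [∀ i, Fintype (PR i)] [∀ i, DecidableEq (PL i)] [∀ i, DecidableEq (PR i)]

lemma prod_vanish_rep (ρA : (i : ι) → Matrix (Ai × (Bo × PL i)) (Ai × (Bo × PL i)) ℂ)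
    (ρB : (i : ι) → Matrix (Bi × (PR i × Ao)) (Bi × (PR i × Ao)) ℂ)
    (hproc : IsProcess3 (sumProc ρA ρB)) (i : ι)
    {W : Matrix Ai Ai ℂ} {Y : Matrix Bo Bo ℂ} {sL : Matrix (PL i) (PL i) ℂ}
    {Z : Matrix Ao Ao ℂ} {V : Matrix Bi Bi ℂ} {sR : Matrix (PR i) (PR i) ℂ}
    (hW : Rep W) (hY : RepD Y) (hsL : Rep sL) (hZ : RepD Z) (hV : Rep V) (hsR : Rep sR) :
    fAq (ρA i) W Y sL * fBq (ρB i) Z V sR = 0 := by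
  obtain ⟨cW, GW, hGW, rfl⟩ := hW
  obtain ⟨cY, GY, GY', hGY, hGY', rfl⟩ := hY
  obtain ⟨cs, Gs, hGs, rfl⟩ := hsL
  obtain ⟨cZ, GZ, GZ', hGZ, hGZ', rfl⟩ := hZ
  obtain ⟨cV, GV, hGV, rfl⟩ := hV
  obtain ⟨ct, Gt, hGt, rfl⟩ := hsR
  have hterm : ∀ k m n m' k' n' : Fin 4,
      fAq (ρA i) (GW k) (GY m - GY' m) (Gs n) * fBq (ρB i) (GZ m' - GZ' m') (GV k') (Gt n') = 0 := by
    intro k m n m' k' n'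
    rw [fAq_sub2, fBq_sub1]
    exact key_vanish ρA ρB hproc i (hGZ m').1 (hGZ' m').1 (hGW k).1 (hGY m).1 (hGY' m).1
      (hGV k').1 (hGs n) (hGt n')
  have hA : fAq (ρA i) (∑ k, cW k • GW k) (∑ m, cY m • (GY m - GY' m)) (∑ n, cs n • Gs n)
      = ∑ k, ∑ m, ∑ n, cW k * (cY m * (cs n * fAq (ρA i) (GW k) (GY m - GY' m) (Gs n))) := by
    rw [fAq_sum1]
    refine Finset.sum_congr rfl fun k _ => ?_
    rw [fAq_smul1, fAq_sum2, Finset.mul_sum]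
    refine Finset.sum_congr rfl fun m _ => ?_
    rw [fAq_smul2, fAq_sum3, Finset.mul_sum, Finset.mul_sum]
    refine Finset.sum_congr rfl fun n _ => ?_
    rw [fAq_smul3]
  have hB : fBq (ρB i) (∑ m', cZ m' • (GZ m' - GZ' m')) (∑ k', cV k' • GV k') (∑ n', ct n' • Gt n')
      = ∑ m', ∑ k', ∑ n', cZ m' * (cV k' * (ct n' * fBq (ρB i) (GZ m' - GZ' m') (GV k') (Gt n'))) := by
    rw [fBq_sum1]
    refine Finset.sum_congr rfl fun m' _ => ?_
    rw [fBq_smul1, fBq_sum2, Finset.mul_sum]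
    refine Finset.sum_congr rfl fun k' _ => ?_
    rw [fBq_smul2, fBq_sum3, Finset.mul_sum, Finset.mul_sum]
    refine Finset.sum_congr rfl fun n' _ => ?_
    rw [fBq_smul3]
  rw [hA, hB]
  rw [Finset.sum_mul]
  refine Finset.sum_eq_zero fun k _ => ?_
  rw [Finset.sum_mul]
  refine Finset.sum_eq_zero fun m _ => ?_
  rw [Finset.sum_mul]
  refine Finset.sum_eq_zero fun n _ => ?_
  rw [Finset.mul_sum]
  refine Finset.sum_eq_zero fun m' _ => ?_
  rw [Finset.mul_sum]
  refine Finset.sum_eq_zero fun k' _ => ?_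
  rw [Finset.mul_sum]
  refine Finset.sum_eq_zero fun n' _ => ?_
  linear_combination (cW k * (cY m * (cs n * (cZ m' * (cV k' * ct n'))))) * hterm k m n m' k' n'

end grand

section wit
variable {n : Type} [Fintype n] [DecidableEq n]

lemma sum_sum_ite1 (f : n → n → ℂ) (p q : n) :
    (∑ x, ∑ y, if x = p ∧ y = q then f x y else 0) = f p q := by
  simp [ite_and]

lemma sum_sum_ite2 (f : n → n → ℂ) (p q : n) :
    (∑ x, ∑ y, if p = x ∧ q = y then f x y else 0) = f p q := by
  simp [ite_and]

lemma pureMat_unitv_apply (p x y : n) :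
    pureMat (unitv p) x y = if x = p ∧ y = p then 1 else 0 := by
  by_cases hx : x = p <;> by_cases hy : y = p <;> simp [pureMat, unitv, hx, hy]

lemma wit (h : n → n → ℂ) (p q : n) (hpq : h p q ≠ 0) (hdiag : ∑ c, h c c = 0) :
    ∃ Y : Matrix n n ℂ, RepD Y ∧ (∑ x, Y x x = 0) ∧ (∑ x, ∑ y, h x y * Y x y) ≠ 0 := by
  by_cases hb : p = q
  · subst hb
    have hcard : (Fintype.card n : ℂ) ≠ 0 := by
      have : 0 < Fintype.card n := Fintype.card_pos_iff.mpr ⟨p⟩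
      exact_mod_cast Nat.cast_ne_zero.mpr this.ne'
    have hex : ∃ c : n, h c c ≠ h p p := by
      by_contra hall
      push_neg at hall
      have hsum : ∑ c, h c c = (Fintype.card n : ℂ) * h p p := by
        rw [Finset.sum_congr rfl fun c _ => hall c]
        simp [Finset.sum_const, Finset.card_univ, mul_comm]
      rw [hdiag] at hsum
      exact hpq ((mul_eq_zero.mp hsum.symm).resolve_left hcard)
    obtain ⟨c1, hc1⟩ := hex
    refine ⟨gOne p - gOne c1, repD_diag p c1, ?_, ?_⟩
    · simp only [Matrix.sub_apply, Finset.sum_sub_distrib, gOne, pureMat_unitv_apply]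
      simp
    · have hval : ∀ x y : n, h x y * ((gOne p - gOne c1) x y)
          = (if x = p ∧ y = p then h x y else 0) - (if x = c1 ∧ y = c1 then h x y else 0) := by
        intro x y
        simp only [Matrix.sub_apply, gOne, pureMat_unitv_apply]
        split_ifs <;> ring
      simp only [hval, Finset.sum_sub_distrib, sum_sum_ite1]
      exact sub_ne_zero.mpr (Ne.symm hc1)
  · refine ⟨Matrix.single p q 1, repD_stdBasis hb, ?_, ?_⟩
    · have hz : ∀ x : n, Matrix.single p q (1:ℂ) x x = 0 := by
        intro x
        by_cases hx : p = x
        · subst hx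
          simp [Matrix.single, Ne.symm hb]
        · simp [Matrix.single, hx]
      simp [hz]
    · have hval : ∀ x y : n, h x y * Matrix.single p q (1:ℂ) x y
          = if p = x ∧ q = y then h x y else 0 := by
        intro x y
        simp only [Matrix.single, Matrix.of_apply]
        split_ifs <;> ring
      simp only [hval, sum_sum_ite2]
      exact hpq

end wit

section evalstd
variable {A B L Bi R Ao : Type} [Fintype A] [Fintype B] [Fintype L] [Fintype Bi] [Fintype R]
  [Fintype Ao] [DecidableEq A] [DecidableEq B] [DecidableEq L] [DecidableEq Bi] [DecidableEq R]
  [DecidableEq Ao]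

lemma fAq_std (ρ : Matrix (A × (B × L)) (A × (B × L)) ℂ) (a0 a0' : A) (l0 l0' : L)
    (Y : Matrix B B ℂ) :
    fAq ρ (Matrix.single a0' a0 1) Y (Matrix.single l0 l0' 1)
      = ∑ bo, ∑ bo', ρ (a0, (bo, l0)) (a0', (bo', l0')) * Y bo bo' := by
  simp only [fAq, Fintype.sum_prod_type, Matrix.single, Matrix.of_apply, mul_ite,
    mul_one, mul_zero, ite_mul, zero_mul, ite_and]
  simp only [Finset.sum_ite_eq, Finset.sum_ite_eq', Finset.mem_univ, if_true,
    Finset.sum_ite_irrel, Finset.sum_const_zero]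

lemma fBq_std (ρ' : Matrix (Bi × (R × Ao)) (Bi × (R × Ao)) ℂ) (b1 b1' : Bi) (r1 r1' : R)
    (Z : Matrix Ao Ao ℂ) :
    fBq ρ' Z (Matrix.single b1' b1 1) (Matrix.single r1 r1' 1)
      = ∑ ao, ∑ ao', ρ' (b1, (r1, ao)) (b1', (r1', ao')) * Z ao ao' := by
  simp only [fBq, Fintype.sum_prod_type, Matrix.single, Matrix.of_apply, mul_ite,
    mul_one, mul_zero, ite_mul, zero_mul, ite_and]
  simp only [Finset.sum_ite_eq, Finset.sum_ite_eq', Finset.mem_univ, if_true,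
    Finset.sum_ite_irrel, Finset.sum_const_zero]

end evalstd

end CausalAux

/-- **In a bipartite process with a root node `P` carrying a direct-sum structure, each
block signals in at most one direction**: if
`σ_{ABP} = Σ_{i∈I} ρ^i_{A|B P_i^L} ⊗ ρ^i_{B|P_i^R A}` is a valid process operator over
the nodes `A`, `B` and the root node `P` (with
`H_{P^out} = ⊕_{i∈I} H_{P_i^L} ⊗ H_{P_i^R}`), where each `ρ^i_{A|B P_i^L}` is the CJ
operator of a channel from `H_{B^out} ⊗ H_{P_i^L}` to `H_{A^in}` and each
`ρ^i_{B|P_i^R A}` the CJ operator of a channel from `H_{P_i^R} ⊗ H_{A^out}` to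
`H_{B^in}`, then for each `i ∈ I`, at most one of the two channels is signalling
(from `B^out` to `A^in`, respectively from `A^out` to `B^in`). -/
theorem direct_sum_blocks_signal_at_most_one_way
    {Ai Ao Bi Bo : Type} (d : ℕ)
    [Fintype Ai] [Fintype Ao] [Fintype Bi] [Fintype Bo]
    [DecidableEq Ai] [DecidableEq Ao] [DecidableEq Bi] [DecidableEq Bo]
    (hdA : Fintype.card Ai = d) (hdA' : Fintype.card Ao = d)
    (hdB : Fintype.card Bi = d) (hdB' : Fintype.card Bo = d)
    {ι : Type} [Fintype ι] [DecidableEq ι]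
    {PL PR : ι → Type} [∀ i, Fintype (PL i)] [∀ i, Fintype (PR i)]
    [∀ i, DecidableEq (PL i)] [∀ i, DecidableEq (PR i)]
    (ρA : (i : ι) → Matrix (Ai × (Bo × PL i)) (Ai × (Bo × PL i)) ℂ)
    (ρB : (i : ι) → Matrix (Bi × (PR i × Ao)) (Bi × (PR i × Ao)) ℂ)
    (hρA : ∀ i, IsChannelCJ (ρA i)) (hρB : ∀ i, IsChannelCJ (ρB i))
    (hproc : IsProcess3 (sumProc ρA ρB)) :
    ∀ i : ι, ¬ (SignallingBtoA (ρA i) ∧ SignallingAtoB (ρB i)) := by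
  classical
  intro i hcontra
  obtain ⟨hsA, hsB⟩ := hcontra
  rw [SignallingBtoA] at hsA
  push_neg at hsA
  obtain ⟨a0, a0', b0, b0', l0, l0', hA⟩ := hsA
  rw [SignallingAtoB] at hsB
  push_neg at hsB
  obtain ⟨b1, b1', a1, a1', r1, r1', hB⟩ := hsB
  open CausalAux in
  set SA : ℂ := ∑ c : Bo, ρA i (a0, (c, l0)) (a0', (c, l0')) with hSA
  set SB : ℂ := ∑ c : Ao, ρB i (b1, (r1, c)) (b1', (r1', c)) with hSB
  set hmA : Bo → Bo → ℂ := fun bo bo' =>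
    ρA i (a0, (bo, l0)) (a0', (bo', l0'))
      - (if bo = bo' then 1 else 0) * (1 / (Fintype.card Bo : ℂ)) * SA with hhmA
  set hmB : Ao → Ao → ℂ := fun ao ao' =>
    ρB i (b1, (r1, ao)) (b1', (r1', ao'))
      - (if ao = ao' then 1 else 0) * (1 / (Fintype.card Ao : ℂ)) * SB with hhmB
  have hcardBo : (Fintype.card Bo : ℂ) ≠ 0 := by
    have : 0 < Fintype.card Bo := Fintype.card_pos_iff.mpr ⟨b0⟩
    exact_mod_cast Nat.cast_ne_zero.mpr this.ne'
  have hcardAo : (Fintype.card Ao : ℂ) ≠ 0 := by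
    have : 0 < Fintype.card Ao := Fintype.card_pos_iff.mpr ⟨a1⟩
    exact_mod_cast Nat.cast_ne_zero.mpr this.ne'
  have hA0 : hmA b0 b0' ≠ 0 := sub_ne_zero.mpr hA
  have hB0 : hmB a1 a1' ≠ 0 := sub_ne_zero.mpr hB
  have hdiagA : ∑ c, hmA c c = 0 := by
    have h1 : ∀ c : Bo, hmA c c
        = ρA i (a0, (c, l0)) (a0', (c, l0')) - (1 / (Fintype.card Bo : ℂ)) * SA := by
      intro c; simp [hhmA]
    rw [Finset.sum_congr rfl fun c _ => h1 c, Finset.sum_sub_distrib, ← hSA,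
      Finset.sum_const, Finset.card_univ, nsmul_eq_mul]
    field_simp
    ring
  have hdiagB : ∑ c, hmB c c = 0 := by
    have h1 : ∀ c : Ao, hmB c c
        = ρB i (b1, (r1, c)) (b1', (r1', c)) - (1 / (Fintype.card Ao : ℂ)) * SB := by
      intro c; simp [hhmB]
    rw [Finset.sum_congr rfl fun c _ => h1 c, Finset.sum_sub_distrib, ← hSB,
      Finset.sum_const, Finset.card_univ, nsmul_eq_mul]
    field_simp
    ring
  obtain ⟨Y, hYrep, hYdiag, hYpair⟩ := CausalAux.wit hmA b0 b0' hA0 hdiagA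
  obtain ⟨Z, hZrep, hZdiag, hZpair⟩ := CausalAux.wit hmB a1 a1' hB0 hdiagB
  have hAval : CausalAux.fAq (ρA i) (Matrix.single a0' a0 1) Y
      (Matrix.single l0 l0' 1) ≠ 0 := by
    rw [CausalAux.fAq_std]
    have hsplit : ∀ bo bo' : Bo, ρA i (a0, (bo, l0)) (a0', (bo', l0')) * Y bo bo'
        = hmA bo bo' * Y bo bo'
          + (if bo = bo' then (1 / (Fintype.card Bo : ℂ)) * SA * Y bo bo' else 0) := by
      intro bo bo'
      simp only [hhmA]
      split_ifs <;> ring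
    rw [Finset.sum_congr rfl fun bo _ => Finset.sum_congr rfl fun bo' _ => hsplit bo bo']
    have hzero : ∑ bo : Bo, ∑ bo' : Bo,
        (if bo = bo' then (1 / (Fintype.card Bo : ℂ)) * SA * Y bo bo' else 0)
        = (1 / (Fintype.card Bo : ℂ)) * SA * ∑ bo, Y bo bo := by
      have hinner : ∀ bo : Bo, (∑ bo' : Bo,
          if bo = bo' then (1 / (Fintype.card Bo : ℂ)) * SA * Y bo bo' else 0)
          = (1 / (Fintype.card Bo : ℂ)) * SA * Y bo bo := fun bo => by simp
      rw [Finset.sum_congr rfl fun bo _ => hinner bo, ← Finset.mul_sum]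
    simp only [Finset.sum_add_distrib, hzero, hYdiag, mul_zero, add_zero]
    exact hYpair
  have hBval : CausalAux.fBq (ρB i) Z (Matrix.single b1' b1 1)
      (Matrix.single r1 r1' 1) ≠ 0 := by
    rw [CausalAux.fBq_std]
    have hsplit : ∀ ao ao' : Ao, ρB i (b1, (r1, ao)) (b1', (r1', ao')) * Z ao ao'
        = hmB ao ao' * Z ao ao'
          + (if ao = ao' then (1 / (Fintype.card Ao : ℂ)) * SB * Z ao ao' else 0) := by
      intro ao ao'
      simp only [hhmB]
      split_ifs <;> ring
    rw [Finset.sum_congr rfl fun ao _ => Finset.sum_congr rfl fun ao' _ => hsplit ao ao']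
    have hzero : ∑ ao : Ao, ∑ ao' : Ao,
        (if ao = ao' then (1 / (Fintype.card Ao : ℂ)) * SB * Z ao ao' else 0)
        = (1 / (Fintype.card Ao : ℂ)) * SB * ∑ ao, Z ao ao := by
      have hinner : ∀ ao : Ao, (∑ ao' : Ao,
          if ao = ao' then (1 / (Fintype.card Ao : ℂ)) * SB * Z ao ao' else 0)
          = (1 / (Fintype.card Ao : ℂ)) * SB * Z ao ao := fun ao => by simp
      rw [Finset.sum_congr rfl fun ao _ => hinner ao, ← Finset.mul_sum]
    simp only [Finset.sum_add_distrib, hzero, hZdiag, mul_zero, add_zero]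
    exact hZpair
  have hvanish := CausalAux.prod_vanish_rep ρA ρB hproc i
    (CausalAux.rep_stdBasis a0' a0) hYrep (CausalAux.rep_stdBasis l0 l0')
    hZrep (CausalAux.rep_stdBasis b1' b1) (CausalAux.rep_stdBasis r1 r1')
  exact (mul_ne_zero hAval hBval) hvanish
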